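/- arXiv:1812.02457 — 2 statements merged into one kernel-verified Lean document; each statement's English description precedes it below -/
import Mathlib

section
/- Assume Δ ≥ 1/2 and ‖V‖ ≤ 2. Then there exist a universal constant C > 0 and a universal t₀ > 0 such that for all 0 < t < t₀: the series S := ∑_{j=1}^{∞} t^j S_j and ∑_{j=1}^{∞} t^{j−1} V_j^{diag} converge in operator norm, and ‖∑_{j=1}^{∞} t^{j−1} V_j^{diag}‖ ≤ 2‖V‖ and ‖S‖ ≤ C · t · ‖V‖. Here V_j^{diag} := P⁺ V_j P⁺ + P⁻ V_j P⁻ denotes the block-diagonal part of V_j. -/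
/-- Iterated commutator along a list of indices:
`adList S [r₁, …, r_p] B = ad S_{r₁} (ad S_{r₂} ( … ad S_{r_p} (B) … ))`. -/
def adList {A : Type*} [Ring A] (S : ℕ → A) : List ℕ → A → A
  | [], B => B
  | r :: rs, B => S r * adList S rs B - adList S rs B * S r

section adListBounds
variable {A : Type*} [NormedRing A] (S : ℕ → A)

lemma adList_cons_norm (r : ℕ) (l : List ℕ) (B : A) :
    ‖adList S (r :: l) B‖ ≤ 2 * ‖S r‖ * ‖adList S l B‖ := by
  show ‖S r * adList S l B - adList S l B * S r‖ ≤ _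
  calc ‖S r * adList S l B - adList S l B * S r‖
      ≤ ‖S r * adList S l B‖ + ‖adList S l B * S r‖ := norm_sub_le _ _
    _ ≤ ‖S r‖ * ‖adList S l B‖ + ‖adList S l B‖ * ‖S r‖ :=
        add_le_add (norm_mul_le _ _) (norm_mul_le _ _)
    _ = 2 * ‖S r‖ * ‖adList S l B‖ := by ring

lemma adList_norm_le (f : ℕ → ℝ) (B : A) :
    ∀ l : List ℕ, (∀ r ∈ l, 2 * ‖S r‖ ≤ f r) →
      ‖adList S l B‖ ≤ (l.map f).prod * ‖B‖
  | [], _ => by simp [adList]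
  | r :: l, h => by
    have h1 : 2 * ‖S r‖ ≤ f r := h r List.mem_cons_self
    have h2 := adList_norm_le f B l (fun x hx => h x (List.mem_cons_of_mem _ hx))
    have hf : (0:ℝ) ≤ f r := le_trans (by positivity) h1
    calc ‖adList S (r :: l) B‖ ≤ 2 * ‖S r‖ * ‖adList S l B‖ := adList_cons_norm S r l B
      _ ≤ f r * ((l.map f).prod * ‖B‖) :=
          mul_le_mul h1 h2 (norm_nonneg _) hf
      _ = ((r :: l).map f).prod * ‖B‖ := by simp [List.prod_cons]; ring

lemma adList_norm_le' (f : ℕ → ℝ) (B : A) (c : ℝ) :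
    ∀ l : List ℕ, l ≠ [] → (∀ r ∈ l, 2 * ‖S r‖ ≤ f r) →
      (∀ r ∈ l, ‖S r * B - B * S r‖ ≤ f r * c) →
      ‖adList S l B‖ ≤ (l.map f).prod * c
  | [], h, _, _ => absurd rfl h
  | [r], _, _, h2 => by
    have : adList S [r] B = S r * B - B * S r := by simp [adList]
    rw [this]; simpa using h2 r (by simp)
  | r :: x :: l, _, h1, h2 => by
    have hr : 2 * ‖S r‖ ≤ f r := h1 r (by simp)
    have hf : (0:ℝ) ≤ f r := le_trans (by positivity) hr
    have ih := adList_norm_le' f B c (x :: l) (by simp)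
      (fun a ha => h1 a (List.mem_cons_of_mem _ ha))
      (fun a ha => h2 a (List.mem_cons_of_mem _ ha))
    calc ‖adList S (r :: x :: l) B‖
        ≤ 2 * ‖S r‖ * ‖adList S (x :: l) B‖ := adList_cons_norm S r _ B
      _ ≤ f r * (((x :: l).map f).prod * c) :=
          mul_le_mul hr ih (norm_nonneg _) hf
      _ = ((r :: x :: l).map f).prod * c := by simp [List.prod_cons]; ring

end adListBounds

lemma euler_sum : ∀ m : ℕ, 1 ≤ m → ∑ b ∈ Finset.Icc 1 m, (1:ℝ)/(b:ℝ)^2 ≤ 2 - 1/(m:ℝ) := by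
  intro m hm
  induction m, hm using Nat.le_induction with
  | base => norm_num
  | succ m hm ih =>
    rw [Finset.sum_Icc_succ_top (by omega)]
    have h1 : (1:ℝ) ≤ (m:ℝ) := by exact_mod_cast hm
    have key : (1:ℝ)/((m:ℝ)+1)^2 ≤ 1/(m:ℝ) - 1/((m:ℝ)+1) := by
      have e : (1:ℝ)/(m:ℝ) - 1/((m:ℝ)+1) = 1/((m:ℝ)*((m:ℝ)+1)) := by
        field_simp
        ring
      rw [e, div_le_div_iff₀ (by positivity) (by positivity)]
      nlinarith
    push_cast
    push_cast at ih
    linarith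

lemma euler_sum_Ico (j : ℕ) : ∑ b ∈ Finset.Ico 1 j, (1:ℝ)/(b:ℝ)^2 ≤ 2 := by
  rcases Nat.lt_or_ge j 2 with h | h
  · interval_cases j <;> simp
  · have he : Finset.Ico 1 j = Finset.Icc 1 (j-1) := by
      rw [← Finset.Ico_add_one_right_eq_Icc]; congr 1; omega
    rw [he]
    have h2 : (0:ℝ) < ((j-1:ℕ):ℝ) := by
      have : 1 ≤ j - 1 := by omega
      exact_mod_cast Nat.lt_of_lt_of_le Nat.zero_lt_one this
    have h3 : (0:ℝ) ≤ 1/((j-1:ℕ):ℝ) := by positivity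
    linarith [euler_sum (j-1) (by omega)]
lemma reflect_sum (j : ℕ) :
    ∑ b ∈ Finset.Ico 1 j, (1:ℝ)/(((j-b:ℕ)):ℝ)^2 = ∑ b ∈ Finset.Ico 1 j, (1:ℝ)/(b:ℝ)^2 := by
  refine Finset.sum_nbij' (fun b => j - b) (fun b => j - b) ?_ ?_ ?_ ?_ ?_
  · intro a ha; simp only [Finset.mem_Ico] at *; omega
  · intro a ha; simp only [Finset.mem_Ico] at *; omega
  · intro a ha; simp only [Finset.mem_Ico] at ha; show j - (j - a) = a; omega
  · intro a ha; simp only [Finset.mem_Ico] at ha; show j - (j - a) = a; omega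
  · intro a ha; rfl

lemma conv_sum (j : ℕ) (hj : 1 ≤ j) :
    ∑ b ∈ Finset.Ico 1 j, (1:ℝ)/((b:ℝ)^2 * (((j-b:ℕ)):ℝ)^2) ≤ 8/(j:ℝ)^2 := by
  have hjR : (0:ℝ) < (j:ℝ) := by exact_mod_cast hj
  have step : ∀ b ∈ Finset.Ico 1 j,
      (1:ℝ)/((b:ℝ)^2 * (((j-b:ℕ)):ℝ)^2)
        ≤ 2/(j:ℝ)^2 * (1/(b:ℝ)^2 + 1/(((j-b:ℕ)):ℝ)^2) := by
    intro b hb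
    simp only [Finset.mem_Ico] at hb
    have hb1 : (1:ℝ) ≤ (b:ℝ) := by exact_mod_cast hb.1
    have hc1 : (1:ℝ) ≤ ((j-b:ℕ):ℝ) := by
      have : 1 ≤ j - b := by omega
      exact_mod_cast this
    have hsum : (b:ℝ) + ((j-b:ℕ):ℝ) = (j:ℝ) := by
      have : b + (j - b) = j := by omega
      exact_mod_cast congrArg (Nat.cast : ℕ → ℝ) this
    set x := (b:ℝ); set y := ((j-b:ℕ):ℝ)
    have hx : (0:ℝ) < x := by linarith
    have hy : (0:ℝ) < y := by linarith
    have e : 2/(j:ℝ)^2 * (1/x^2 + 1/y^2) = (2*(y^2+x^2))/((j:ℝ)^2*(x^2*y^2)) := by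
      field_simp
    rw [e, div_le_div_iff₀ (by positivity) (by positivity), ← hsum]
    nlinarith [mul_nonneg (sq_nonneg (x - y)) (by positivity : (0:ℝ) ≤ x^2*y^2)]
  calc ∑ b ∈ Finset.Ico 1 j, (1:ℝ)/((b:ℝ)^2 * (((j-b:ℕ)):ℝ)^2)
      ≤ ∑ b ∈ Finset.Ico 1 j, 2/(j:ℝ)^2 * (1/(b:ℝ)^2 + 1/(((j-b:ℕ)):ℝ)^2) :=
        Finset.sum_le_sum step
    _ = 2/(j:ℝ)^2 * ((∑ b ∈ Finset.Ico 1 j, 1/(b:ℝ)^2)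
          + ∑ b ∈ Finset.Ico 1 j, 1/(((j-b:ℕ)):ℝ)^2) := by
        rw [← Finset.mul_sum, Finset.sum_add_distrib]
    _ ≤ 2/(j:ℝ)^2 * (2 + 2) := by
        have h1 := euler_sum_Ico j
        have h2 : ∑ b ∈ Finset.Ico 1 j, (1:ℝ)/(((j-b:ℕ)):ℝ)^2 ≤ 2 := by
          rw [reflect_sum]; exact euler_sum_Ico j
        exact mul_le_mul_of_nonneg_left (by linarith) (by positivity)
    _ = 8/(j:ℝ)^2 := by ring

open Finset

noncomputable section

def gfun (r : ℕ) : ℝ := 16 * 2048^(r-1) / (r:ℝ)^2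

lemma gfun_nonneg (r : ℕ) : 0 ≤ gfun r := by unfold gfun; positivity

def cProd (l : List ℕ) : ℝ := (l.map gfun).prod

lemma cProd_nonneg (l : List ℕ) : 0 ≤ cProd l := by
  apply List.prod_nonneg; intro x hx
  simp only [List.mem_map] at hx; obtain ⟨r, _, rfl⟩ := hx; exact gfun_nonneg r

lemma cProd_cons (a : ℕ) (l : List ℕ) : cProd (a :: l) = gfun a * cProd l := by
  simp [cProd]

def cSum (j : ℕ) : ℝ := ∑ c : Composition j, cProd c.blocks

lemma cSum_nonneg (j : ℕ) : 0 ≤ cSum j :=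
  Finset.sum_nonneg fun c _ => cProd_nonneg _

lemma headI_cons_tail {l : List ℕ} (h : l ≠ []) : l.headI :: l.tail = l := by
  cases l with | nil => exact absurd rfl h | cons a l => rfl

lemma headI_add_tail_sum (l : List ℕ) : l.headI + l.tail.sum = l.sum := by
  cases l with | nil => simp | cons a l => simp [List.sum_cons]

lemma blocks_ne_nil {j : ℕ} (hj : 1 ≤ j) (c : Composition j) : c.blocks ≠ [] := by
  intro h
  have := c.blocks_sum
  rw [h] at this
  simp at this; omega

lemma tail_sum_pos {j : ℕ} (hj : 1 ≤ j) (c : Composition j) (hc : 2 ≤ c.length) :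
    1 ≤ c.blocks.tail.sum := by
  have hlen : 2 ≤ c.blocks.length := hc
  have hne : c.blocks.tail ≠ [] := by
    intro h
    have := List.length_tail (l := c.blocks)
    rw [h] at this
    simp at this; omega
  obtain ⟨a, l, hl⟩ := List.exists_cons_of_ne_nil hne
  have ha : a ∈ c.blocks := List.mem_of_mem_tail (hl ▸ List.mem_cons_self (a := a) (l := l))
  have := c.blocks_pos ha
  rw [hl, List.sum_cons]
  omega

/-- Splitting off the first block : upper bound for the sum over compositions
of length ≥ 2. -/
lemma split_sum {j : ℕ} (hj : 1 ≤ j) :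
    ∑ c ∈ Finset.univ.filter (fun c : Composition j => 2 ≤ c.length), cProd c.blocks
      ≤ ∑ b ∈ Finset.Ico 1 j, gfun b * cSum (j - b) := by
  classical
  set F : (Σ b : ℕ, Composition (j - b)) → ℝ := fun p => gfun p.1 * cProd p.2.blocks with hF
  set i : Composition j → (Σ b : ℕ, Composition (j - b)) := fun c =>
    ⟨c.blocks.headI,
      ⟨c.blocks.tail,
       fun hi => c.blocks_pos (List.mem_of_mem_tail hi),
       by
        have h1 := headI_add_tail_sum c.blocks
        rw [c.blocks_sum] at h1
        omega⟩⟩ with hi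
  have hval : ∀ c : Composition j, cProd c.blocks = F (i c) := by
    intro c
    show cProd c.blocks = gfun c.blocks.headI * cProd c.blocks.tail
    rw [← cProd_cons, headI_cons_tail (blocks_ne_nil hj c)]
  have hinj : ∀ x ∈ Finset.univ.filter (fun c : Composition j => 2 ≤ c.length),
      ∀ y ∈ Finset.univ.filter (fun c : Composition j => 2 ≤ c.length),
      i x = i y → x = y := by
    intro x _ y _ hxy
    have h1 : x.blocks.headI = y.blocks.headI := congrArg Sigma.fst hxy
    have h2 : x.blocks.tail = y.blocks.tail :=
      congrArg (fun p : (Σ b : ℕ, Composition (j - b)) => p.2.blocks) hxy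
    have : x.blocks = y.blocks := by
      rw [← headI_cons_tail (blocks_ne_nil hj x), ← headI_cons_tail (blocks_ne_nil hj y),
        h1, h2]
    exact Composition.ext this
  calc ∑ c ∈ Finset.univ.filter (fun c : Composition j => 2 ≤ c.length), cProd c.blocks
      = ∑ c ∈ Finset.univ.filter (fun c : Composition j => 2 ≤ c.length), F (i c) :=
        Finset.sum_congr rfl fun c _ => hval c
    _ = ∑ p ∈ (Finset.univ.filter (fun c : Composition j => 2 ≤ c.length)).image i, F p :=
        (Finset.sum_image hinj).symm
    _ ≤ ∑ p ∈ (Finset.Ico 1 j).sigma (fun _ => (Finset.univ : Finset (Composition (j - _)))), F p := by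
        apply Finset.sum_le_sum_of_subset_of_nonneg
        · intro p hp
          simp only [Finset.mem_image] at hp
          obtain ⟨c, hc, rfl⟩ := hp
          simp only [Finset.mem_filter, Finset.mem_univ, true_and] at hc
          simp only [Finset.mem_sigma, Finset.mem_Ico, Finset.mem_univ, and_true]
          constructor
          · have hmem : c.blocks.headI ∈ c.blocks := by
              conv => rw [← headI_cons_tail (blocks_ne_nil hj c)]
              exact List.mem_cons_self
            exact c.blocks_pos hmem
          · have h1 := headI_add_tail_sum c.blocks
            rw [c.blocks_sum] at h1
            have := tail_sum_pos hj c hc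
            show c.blocks.headI < j
            omega
        · intro p _ _
          exact mul_nonneg (gfun_nonneg _) (cProd_nonneg _)
    _ = ∑ b ∈ Finset.Ico 1 j, gfun b * cSum (j - b) := by
        rw [Finset.sum_sigma]
        refine Finset.sum_congr rfl fun b _ => ?_
        rw [cSum, Finset.mul_sum]

end
lemma ksl {j : ℕ} (hj : 1 ≤ j)
    (ih : ∀ m, 1 ≤ m → m < j → cSum m ≤ 32 * 2048^(m-1) / (m:ℝ)^2) :
    ∑ b ∈ Finset.Ico 1 j, gfun b * cSum (j - b) ≤ 2 * 2048^(j-1) / (j:ℝ)^2 := by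
  rcases Nat.lt_or_ge j 2 with h2 | h2
  · have : j = 1 := by omega
    subst this
    simp
  · have hjR : (0:ℝ) < (j:ℝ) := by exact_mod_cast hj
    have step : ∀ b ∈ Finset.Ico 1 j,
        gfun b * cSum (j - b)
          ≤ 512 * 2048^(j-2) * (1/((b:ℝ)^2 * (((j-b:ℕ)):ℝ)^2)) := by
      intro b hb
      simp only [Finset.mem_Ico] at hb
      have h3 : cSum (j - b) ≤ 32 * 2048^(j-b-1) / (((j-b:ℕ)):ℝ)^2 :=
        ih (j - b) (by omega) (by omega)
      calc gfun b * cSum (j - b)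
          ≤ gfun b * (32 * 2048^(j-b-1) / (((j-b:ℕ)):ℝ)^2) :=
            mul_le_mul_of_nonneg_left h3 (gfun_nonneg b)
        _ = 512 * 2048^(j-2) * (1/((b:ℝ)^2 * (((j-b:ℕ)):ℝ)^2)) := by
            unfold gfun
            rw [div_mul_div_comm]
            have he : (2048:ℝ)^(b-1) * 2048^(j-b-1) = 2048^(j-2) := by
              rw [← pow_add]
              congr 1
              omega
            field_simp
            ring_nf
            rw [← he]
            ring
    calc ∑ b ∈ Finset.Ico 1 j, gfun b * cSum (j - b)
        ≤ ∑ b ∈ Finset.Ico 1 j, 512 * 2048^(j-2) * (1/((b:ℝ)^2 * (((j-b:ℕ)):ℝ)^2)) :=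
          Finset.sum_le_sum step
      _ = 512 * 2048^(j-2) * ∑ b ∈ Finset.Ico 1 j, (1:ℝ)/((b:ℝ)^2 * (((j-b:ℕ)):ℝ)^2) := by
          rw [Finset.mul_sum]
      _ ≤ 512 * 2048^(j-2) * (8/(j:ℝ)^2) :=
          mul_le_mul_of_nonneg_left (conv_sum j hj) (by positivity)
      _ = 2 * 2048^(j-1) / (j:ℝ)^2 := by
          have he : (2048:ℝ)^(j-1) = 2048^(j-2) * 2048 := by
            rw [← pow_succ]
            congr 1
            omega
          rw [he]
          ring

lemma cSum_le : ∀ j : ℕ, 1 ≤ j → cSum j ≤ 32 * 2048^(j-1) / (j:ℝ)^2 := by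
  intro j
  induction j using Nat.strong_induction_on with
  | _ j ih =>
    intro hj
    have hsplit := Finset.sum_filter_add_sum_filter_not Finset.univ
      (fun c : Composition j => 2 ≤ c.length) (fun c => cProd c.blocks)
    have h1 : ∑ c ∈ Finset.univ.filter (fun c : Composition j => ¬ 2 ≤ c.length),
        cProd c.blocks ≤ gfun j := by
      have hsub : Finset.univ.filter (fun c : Composition j => ¬ 2 ≤ c.length)
          ⊆ {Composition.single j (by omega)} := by
        intro c hc
        simp only [Finset.mem_filter, Finset.mem_univ, true_and, not_le] at hc
        simp only [Finset.mem_singleton]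
        rw [Composition.eq_single_iff_length]
        have := c.length_pos_of_pos (by omega)
        omega
      calc ∑ c ∈ Finset.univ.filter (fun c : Composition j => ¬ 2 ≤ c.length), cProd c.blocks
          ≤ ∑ c ∈ ({Composition.single j (by omega)} : Finset (Composition j)), cProd c.blocks :=
            Finset.sum_le_sum_of_subset_of_nonneg hsub (fun c _ _ => cProd_nonneg _)
        _ = cProd [j] := by rw [Finset.sum_singleton, Composition.single_blocks]
        _ = gfun j := by simp [cProd]
    have h2 := split_sum (j := j) (by omega)
    have h3 := ksl (j := j) (by omega) (fun m hm hmj => ih m hmj hm)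
    have h4 : gfun j ≤ 16 * 2048^(j-1) / (j:ℝ)^2 := le_of_eq rfl
    have hjR : (0:ℝ) < (j:ℝ) := by exact_mod_cast hj
    calc cSum j = _ + _ := hsplit.symm
      _ ≤ (2 * 2048^(j-1) / (j:ℝ)^2) + 16 * 2048^(j-1) / (j:ℝ)^2 :=
          add_le_add (le_trans h2 h3) (le_trans h1 h4)
      _ ≤ 32 * 2048^(j-1) / (j:ℝ)^2 := by
          rw [← add_div, div_le_div_iff₀ (by positivity) (by positivity)]
          have : (0:ℝ) < (2048:ℝ)^(j-1) := by positivity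
          nlinarith

open scoped ComplexInnerProductSpace

variable {𝒦 : Type} [NormedAddCommGroup 𝒦] [InnerProductSpace ℂ 𝒦] [FiniteDimensional ℂ 𝒦]

lemma proj_norm_le_one (P : 𝒦 →L[ℂ] 𝒦) (h1 : IsSelfAdjoint P) (h2 : P * P = P) :
    ‖P‖ ≤ 1 := by
  have h := CStarRing.norm_star_mul_self (x := P)
  rw [h1.star_eq, h2] at h
  nlinarith [norm_nonneg P]

lemma oneSubProj (P : 𝒦 →L[ℂ] 𝒦) (h1 : IsSelfAdjoint P) (h2 : P * P = P) :
    IsSelfAdjoint (1 - P) ∧ (1 - P) * (1 - P) = (1 - P) := by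
  constructor
  · show star (1 - P) = 1 - P
    rw [star_sub, star_one, h1.star_eq]
  · noncomm_ring [h2]

lemma diag_norm_le (P : 𝒦 →L[ℂ] 𝒦) (h1 : IsSelfAdjoint P) (h2 : P * P = P)
    (W : 𝒦 →L[ℂ] 𝒦) : ‖(1 - P) * W * (1 - P) + P * W * P‖ ≤ ‖W‖ := by
  obtain ⟨hq1, hq2⟩ := oneSubProj P h1 h2
  set Q : 𝒦 →L[ℂ] 𝒦 := 1 - P with hQ
  have hQP : Q * P = 0 := by rw [hQ]; noncomm_ring [h2]
  have hPQ : P * Q = 0 := by rw [hQ]; noncomm_ring [h2]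
  apply ContinuousLinearMap.opNorm_le_bound _ (norm_nonneg W)
  intro x
  have horth : ∀ u w : 𝒦, ⟪Q u, P w⟫ = 0 := by
    intro u w
    have hadj : ContinuousLinearMap.adjoint Q = Q :=
      ContinuousLinearMap.isSelfAdjoint_iff'.mp hq1
    have : ⟪Q u, P w⟫ = ⟪u, Q (P w)⟫ := by
      conv_lhs => rw [← hadj]
      exact ContinuousLinearMap.adjoint_inner_left Q (P w) u
    rw [this, ← ContinuousLinearMap.mul_apply, hQP]
    simp
  have hx : ‖P x‖^2 + ‖Q x‖^2 = ‖x‖^2 := by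
    have hxd : x = Q x + P x := by
      rw [hQ]; simp
    have := norm_add_sq (𝕜 := ℂ) (Q x) (P x)
    rw [horth x x] at this
    simp at this
    calc ‖P x‖^2 + ‖Q x‖^2 = ‖Q x + P x‖^2 := by rw [this]; ring
      _ = ‖x‖^2 := by rw [← hxd]
  have happ : ((1 - P) * W * (1 - P) + P * W * P) x = Q (W (Q x)) + P (W (P x)) := by
    simp [hQ, ContinuousLinearMap.mul_apply]
  rw [happ]
  have hsq : ‖Q (W (Q x)) + P (W (P x))‖^2 ≤ (‖W‖ * ‖x‖)^2 := by
    have := norm_add_sq (𝕜 := ℂ) (Q (W (Q x))) (P (W (P x)))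
    rw [horth _ _] at this
    simp at this
    rw [this]
    have b1 : ‖Q (W (Q x))‖ ≤ ‖W‖ * ‖Q x‖ := by
      calc ‖Q (W (Q x))‖ ≤ ‖Q‖ * ‖W (Q x)‖ := Q.le_opNorm _
        _ ≤ 1 * (‖W‖ * ‖Q x‖) :=
          mul_le_mul (proj_norm_le_one Q hq1 hq2) (W.le_opNorm _) (norm_nonneg _) zero_le_one
        _ = ‖W‖ * ‖Q x‖ := one_mul _
    have b2 : ‖P (W (P x))‖ ≤ ‖W‖ * ‖P x‖ := by
      calc ‖P (W (P x))‖ ≤ ‖P‖ * ‖W (P x)‖ := P.le_opNorm _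
        _ ≤ 1 * (‖W‖ * ‖P x‖) :=
          mul_le_mul (proj_norm_le_one P h1 h2) (W.le_opNorm _) (norm_nonneg _) zero_le_one
        _ = ‖W‖ * ‖P x‖ := one_mul _
    have c1 : ‖Q (W (Q x))‖^2 ≤ (‖W‖ * ‖Q x‖)^2 :=
      pow_le_pow_left₀ (norm_nonneg _) b1 2
    have c2 : ‖P (W (P x))‖^2 ≤ (‖W‖ * ‖P x‖)^2 :=
      pow_le_pow_left₀ (norm_nonneg _) b2 2
    calc ‖Q (W (Q x))‖^2 + ‖P (W (P x))‖^2
        ≤ (‖W‖ * ‖Q x‖)^2 + (‖W‖ * ‖P x‖)^2 := add_le_add c1 c2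
      _ = ‖W‖^2 * (‖P x‖^2 + ‖Q x‖^2) := by ring
      _ = (‖W‖ * ‖x‖)^2 := by rw [hx]; ring
  nlinarith [norm_nonneg (Q (W (Q x)) + P (W (P x))), mul_nonneg (norm_nonneg W) (norm_nonneg x)]
lemma R_norm_le
    (G Pm R : 𝒦 →L[ℂ] 𝒦) (E Δ : ℝ)
    (hΔ : (1/2 : ℝ) ≤ Δ)
    (hPos : ((((1 : 𝒦 →L[ℂ] 𝒦) - Pm) * (G - (E : ℂ) • 1) * (1 - Pm))
        - ((Δ : ℂ) • ((1 : 𝒦 →L[ℂ] 𝒦) - Pm))).IsPositive)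
    (hR2 : (G - (E : ℂ) • 1) * R = 1 - Pm)
    (hR3 : R = (1 - Pm) * R * (1 - Pm))
    (hPm1 : IsSelfAdjoint Pm) (hPm2 : Pm * Pm = Pm) :
    ‖R‖ ≤ 2 := by
  obtain ⟨hq1, hq2⟩ := oneSubProj Pm hPm1 hPm2
  set Q : 𝒦 →L[ℂ] 𝒦 := 1 - Pm with hQ
  have hQR : Q * R = R := by
    rw [hR3]; show Q * (Q * R * Q) = Q * R * Q
    rw [← mul_assoc, ← mul_assoc, hq2]
  have hTR : (Q * (G - (E : ℂ) • 1) * Q - (Δ : ℂ) • Q) * R = Q - (Δ : ℂ) • R := by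
    rw [sub_mul, smul_mul_assoc, hQR]
    congr 1
    rw [mul_assoc, hQR, mul_assoc, hR2, hq2]
  apply ContinuousLinearMap.opNorm_le_bound _ (by norm_num)
  intro y
  have hpos := hPos.2 (R y)
  rw [ContinuousLinearMap.reApplyInnerSelf_apply, ← ContinuousLinearMap.mul_apply, hTR] at hpos
  have hinner : (⟪(Q - (Δ:ℂ) • R) y, R y⟫ : ℂ) = ⟪Q y, R y⟫ - ((Δ * ‖R y‖^2 : ℝ) : ℂ) := by
    rw [ContinuousLinearMap.sub_apply, ContinuousLinearMap.smul_apply, inner_sub_left,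
      inner_smul_left, Complex.conj_ofReal, inner_self_eq_norm_sq_to_K]
    push_cast
    set z : ℂ := ⟪Q y, R y⟫
    rfl
  rw [hinner, map_sub] at hpos
  have hred : RCLike.re (((Δ * ‖R y‖^2 : ℝ)) : ℂ) = Δ * ‖R y‖^2 := RCLike.ofReal_re _
  rw [hred] at hpos
  -- hpos : 0 ≤ re ⟪Q y, R y⟫ - Δ * ‖R y‖ ^ 2
  have hCS : RCLike.re (⟪Q y, R y⟫ : ℂ) ≤ ‖y‖ * ‖R y‖ := by
    calc RCLike.re (⟪Q y, R y⟫ : ℂ) ≤ ‖(⟪Q y, R y⟫ : ℂ)‖ := RCLike.re_le_norm _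
      _ ≤ ‖Q y‖ * ‖R y‖ := norm_inner_le_norm _ _
      _ ≤ 1 * ‖y‖ * ‖R y‖ := by
          have h1 : ‖Q y‖ ≤ 1 * ‖y‖ := by
            have := (proj_norm_le_one Q hq1 hq2)
            calc ‖Q y‖ ≤ ‖Q‖ * ‖y‖ := Q.le_opNorm y
              _ ≤ 1 * ‖y‖ := mul_le_mul_of_nonneg_right this (norm_nonneg y)
          exact mul_le_mul_of_nonneg_right h1 (norm_nonneg _)
      _ = ‖y‖ * ‖R y‖ := by ring
  nlinarith [norm_nonneg (R y), norm_nonneg y]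
lemma prod3_norm (X W P : 𝒦 →L[ℂ] 𝒦) (hX : ‖X‖ ≤ 2) (hP : ‖P‖ ≤ 1) :
    ‖X * W * P‖ ≤ 2 * ‖W‖ := by
  calc ‖X * W * P‖ ≤ ‖X * W‖ * ‖P‖ := norm_mul_le _ _
    _ ≤ ‖X * W‖ * 1 := mul_le_mul_of_nonneg_left hP (norm_nonneg _)
    _ = ‖X * W‖ := mul_one _
    _ ≤ ‖X‖ * ‖W‖ := norm_mul_le _ _
    _ ≤ 2 * ‖W‖ := mul_le_mul_of_nonneg_right hX (norm_nonneg _)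

lemma norm_star_clm (X : 𝒦 →L[ℂ] 𝒦) : ‖star X‖ = ‖X‖ := by
  rw [ContinuousLinearMap.star_eq_adjoint]
  exact ContinuousLinearMap.adjoint.norm_map X

lemma S_norm_le (R W Pm : 𝒦 →L[ℂ] 𝒦) (hRn : ‖R‖ ≤ 2) (hPmn : ‖Pm‖ ≤ 1) :
    ‖R * W * Pm - ContinuousLinearMap.adjoint (R * W * Pm)‖ ≤ 4 * ‖W‖ := by
  rw [← ContinuousLinearMap.star_eq_adjoint]
  calc ‖R * W * Pm - star (R * W * Pm)‖
      ≤ ‖R * W * Pm‖ + ‖star (R * W * Pm)‖ := norm_sub_le _ _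
    _ = ‖R * W * Pm‖ + ‖R * W * Pm‖ := by rw [norm_star_clm]
    _ ≤ 2 * ‖W‖ + 2 * ‖W‖ := add_le_add (prod3_norm R W Pm hRn hPmn) (prod3_norm R W Pm hRn hPmn)
    _ = 4 * ‖W‖ := by ring

lemma comm_bound (G Pm R : 𝒦 →L[ℂ] 𝒦) (E : ℝ) (W : 𝒦 →L[ℂ] 𝒦)
    (hG : IsSelfAdjoint G)
    (hPm1 : IsSelfAdjoint Pm) (hPm2 : Pm * Pm = Pm)
    (hGPm : G * Pm = (E : ℂ) • Pm)
    (hR2 : (G - (E : ℂ) • 1) * R = 1 - Pm) :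
    ‖(R * W * Pm - ContinuousLinearMap.adjoint (R * W * Pm)) * G
      - G * (R * W * Pm - ContinuousLinearMap.adjoint (R * W * Pm))‖ ≤ 2 * ‖W‖ := by
  rw [← ContinuousLinearMap.star_eq_adjoint]
  set A : 𝒦 →L[ℂ] 𝒦 := R * W * Pm with hA
  set B : 𝒦 →L[ℂ] 𝒦 := (1 - Pm) * W * Pm with hB
  have hPmG : Pm * G = (E : ℂ) • Pm := by
    have h := congrArg star hGPm
    rwa [star_mul, hG.star_eq, hPm1.star_eq, star_smul, hPm1.star_eq, Complex.star_def,
      Complex.conj_ofReal] at h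
  have hGR : G * R = (1 - Pm) + (E : ℂ) • R := by
    have h : (G - (E:ℂ) • 1) * R = G * R - (E:ℂ) • R := by
      rw [sub_mul, smul_mul_assoc, one_mul]
    rw [h] at hR2
    rw [← hR2]
    abel
  have hAG : A * G = (E : ℂ) • A := by
    rw [hA, mul_assoc, hPmG, mul_smul_comm, mul_assoc]
  have hGA : G * A = B + (E : ℂ) • A := by
    rw [hA, hB, ← mul_assoc, ← mul_assoc, hGR, add_mul, add_mul, smul_mul_assoc,
      smul_mul_assoc]
  have hA'G : star A * G = star (G * A) := by
    conv_rhs => rw [star_mul, hG.star_eq]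
  have hGA' : G * star A = star (A * G) := by
    conv_rhs => rw [star_mul, hG.star_eq]
  have hid : (A - star A) * G - G * (A - star A) = -(B + star B) := by
    calc (A - star A) * G - G * (A - star A)
        = A * G - star (G * A) - (G * A - star (A * G)) := by
          rw [sub_mul, mul_sub, hA'G, hGA']
      _ = (E:ℂ) • A - star (B + (E:ℂ) • A) - ((B + (E:ℂ) • A) - star ((E:ℂ) • A)) := by
          rw [hAG, hGA]
      _ = -(B + star B) := by rw [star_add]; abel
  rw [hid, norm_neg]
  have hBn : ‖B‖ ≤ 1 * ‖W‖ := by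
    rw [hB]
    calc ‖(1 - Pm) * W * Pm‖ ≤ ‖(1 - Pm) * W‖ * ‖Pm‖ := norm_mul_le _ _
      _ ≤ ‖(1 - Pm) * W‖ * 1 := mul_le_mul_of_nonneg_left (proj_norm_le_one Pm hPm1 hPm2)
          (norm_nonneg _)
      _ = ‖(1 - Pm) * W‖ := mul_one _
      _ ≤ ‖1 - Pm‖ * ‖W‖ := norm_mul_le _ _
      _ ≤ 1 * ‖W‖ := mul_le_mul_of_nonneg_right
          (proj_norm_le_one _ (oneSubProj Pm hPm1 hPm2).1 (oneSubProj Pm hPm1 hPm2).2)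
          (norm_nonneg _)
  calc ‖B + star B‖ ≤ ‖B‖ + ‖star B‖ := norm_add_le _ _
    _ = ‖B‖ + ‖B‖ := by rw [norm_star_clm]
    _ ≤ 1 * ‖W‖ + 1 * ‖W‖ := add_le_add hBn hBn
    _ = 2 * ‖W‖ := by ring

set_option maxHeartbeats 1000000 in
set_option synthInstance.maxHeartbeats 100000 in
/-- there are a universal constant `C > 0` and a universal `t₀ > 0` such
that for every finite-dimensional complex Hilbert space `𝒦`, every self-adjoint `G`
block-diagonal w.r.t. an orthogonal projection `P⁻`, with `G P⁻ = E P⁻`,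
`E = min spec G`, spectral gap `P⁺(G-E)P⁺ ≥ Δ P⁺` with `Δ ≥ 1/2` (with `R` the inverse
of `G - E` on the range of `P⁺`), and every self-adjoint `V` with `‖V‖ ≤ 2`, the
Lie-Schwinger series `S = ∑_{j≥1} t^j S_j` and `∑_{j≥1} t^{j-1} V_j^{diag}` (with
`V_j`, `S_j` given by the Lie-Schwinger recursion) converge in operator norm for all
`0 < t < t₀`, with `‖∑_{j≥1} t^{j-1} V_j^{diag}‖ ≤ 2‖V‖` and `‖S‖ ≤ C t ‖V‖`. -/
theorem lieSchwinger_series_bounds :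
    ∃ C : ℝ, 0 < C ∧ ∃ t₀ : ℝ, 0 < t₀ ∧
    ∀ (𝒦 : Type) [NormedAddCommGroup 𝒦] [InnerProductSpace ℂ 𝒦]
      [FiniteDimensional ℂ 𝒦],
    ∀ (G Pm R V : 𝒦 →L[ℂ] 𝒦) (E Δ : ℝ),
      IsSelfAdjoint G →
      IsSelfAdjoint Pm → Pm * Pm = Pm →
      G = (1 - Pm) * G * (1 - Pm) + Pm * G * Pm →
      G * Pm = (E : ℂ) • Pm →
      (E : ℂ) ∈ spectrum ℂ G →
      (∀ z ∈ spectrum ℂ G, E ≤ z.re) →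
      (1 / 2 : ℝ) ≤ Δ →
      ((((1 : 𝒦 →L[ℂ] 𝒦) - Pm) * (G - (E : ℂ) • 1) * (1 - Pm))
        - ((Δ : ℂ) • ((1 : 𝒦 →L[ℂ] 𝒦) - Pm))).IsPositive →
      R * (G - (E : ℂ) • 1) = 1 - Pm →
      (G - (E : ℂ) • 1) * R = 1 - Pm →
      R = (1 - Pm) * R * (1 - Pm) →
      IsSelfAdjoint V → ‖V‖ ≤ 2 →
    ∀ (Vseq Sseq : ℕ → 𝒦 →L[ℂ] 𝒦),
      Vseq 1 = V →
      (∀ j, 1 ≤ j → Sseq j = R * Vseq j * Pm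
        - ContinuousLinearMap.adjoint (R * Vseq j * Pm)) →
      (∀ j, 2 ≤ j → Vseq j =
        (∑ c ∈ Finset.univ.filter (fun c : Composition j => 2 ≤ c.length),
            (((c.length).factorial : ℂ))⁻¹ • adList Sseq c.blocks G)
        + ∑ c : Composition (j - 1),
            (((c.length).factorial : ℂ))⁻¹ • adList Sseq c.blocks V) →
    ∀ t : ℝ, 0 < t → t < t₀ →
      Summable (fun j : ℕ => ((t : ℂ)) ^ (j + 1) • Sseq (j + 1)) ∧
      Summable (fun j : ℕ => ((t : ℂ)) ^ j •
        ((1 - Pm) * Vseq (j + 1) * (1 - Pm) + Pm * Vseq (j + 1) * Pm)) ∧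
      ‖∑' j : ℕ, ((t : ℂ)) ^ j •
          ((1 - Pm) * Vseq (j + 1) * (1 - Pm) + Pm * Vseq (j + 1) * Pm)‖ ≤ 2 * ‖V‖ ∧
      ‖∑' j : ℕ, ((t : ℂ)) ^ (j + 1) • Sseq (j + 1)‖ ≤ C * t * ‖V‖ := by
  refine ⟨8, by norm_num, 1/8192, by norm_num, ?_⟩
  intro 𝒦 _ _ _ G Pm R V E Δ hG hPm1 hPm2 hblock hGPm hspec hmin hΔ hPos hR1 hR2 hR3 hV hVn
  intro Vseq Sseq hV1 hS hVrec t ht ht0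
  have hRn : ‖R‖ ≤ 2 := R_norm_le G Pm R E Δ hΔ hPos hR2 hR3 hPm1 hPm2
  have hPmn : ‖Pm‖ ≤ 1 := proj_norm_le_one Pm hPm1 hPm2
  have fact_smul : ∀ (n : ℕ) (X : 𝒦 →L[ℂ] 𝒦), ‖((n.factorial : ℂ))⁻¹ • X‖ ≤ ‖X‖ := by
    intro n X
    refine (norm_smul_le ((n.factorial:ℂ))⁻¹ X).trans ?_
    rw [norm_inv, Complex.norm_natCast]
    have h1 : (1:ℝ) ≤ (n.factorial : ℝ) := by exact_mod_cast n.factorial_pos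
    have h2 : ((n.factorial : ℝ))⁻¹ ≤ 1 := by
      rw [inv_le_one_iff₀]; right; exact h1
    exact mul_le_of_le_one_left (norm_nonneg X) h2
  have MAIN : ∀ j, 1 ≤ j → ‖Vseq j‖ ≤ ‖V‖ * 2048^(j-1) / (j:ℝ)^2 := by
    intro j
    induction j using Nat.strong_induction_on with
    | _ j ih =>
      intro hj
      rcases Nat.lt_or_ge j 2 with hj2 | hj2
      · have hj1 : j = 1 := by omega
        subst hj1
        rw [hV1]
        norm_num
      · have hSb : ∀ r, 1 ≤ r → r < j → 2 * ‖Sseq r‖ ≤ gfun r := by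
          intro r hr1 hrj
          have hv := ih r hrj hr1
          have hs : ‖Sseq r‖ ≤ 4 * ‖Vseq r‖ := by
            rw [hS r hr1]; exact S_norm_le R (Vseq r) Pm hRn hPmn
          have hq : (0:ℝ) ≤ 2048^(r-1) / (r:ℝ)^2 := by positivity
          have h3 : 8 * (‖V‖ * 2048^(r-1) / (r:ℝ)^2) ≤ gfun r := by
            have h4 := mul_le_mul_of_nonneg_right
              (show 8 * ‖V‖ ≤ 16 by linarith) hq
            calc 8 * (‖V‖ * 2048^(r-1) / (r:ℝ)^2)
                = (8 * ‖V‖) * (2048^(r-1) / (r:ℝ)^2) := by ring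
              _ ≤ 16 * (2048^(r-1) / (r:ℝ)^2) := h4
              _ = gfun r := by unfold gfun; ring
          linarith
        have hCb : ∀ r, 1 ≤ r → r < j →
            ‖Sseq r * G - G * Sseq r‖ ≤ gfun r * (‖V‖/8) := by
          intro r hr1 hrj
          have hv := ih r hrj hr1
          have hcomm : ‖Sseq r * G - G * Sseq r‖ ≤ 2 * ‖Vseq r‖ := by
            rw [hS r hr1]
            exact comm_bound G Pm R E (Vseq r) hG hPm1 hPm2 hGPm hR2
          have heq : gfun r * (‖V‖/8) = 2 * (‖V‖ * 2048^(r-1) / (r:ℝ)^2) := by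
            unfold gfun; ring
          rw [heq]
          linarith
        have hterm1 : ∀ c ∈ Finset.univ.filter (fun c : Composition j => 2 ≤ c.length),
            ‖(((c.length).factorial : ℂ))⁻¹ • adList Sseq c.blocks G‖
              ≤ cProd c.blocks * (‖V‖/8) := by
          intro c hc
          simp only [Finset.mem_filter, Finset.mem_univ, true_and] at hc
          have hne : c.blocks ≠ [] := blocks_ne_nil (by omega) c
          have hrlt : ∀ r ∈ c.blocks, r < j := by
            intro r hr
            have hht := headI_add_tail_sum c.blocks
            rw [c.blocks_sum] at hht
            have htp := tail_sum_pos (by omega) c hc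
            have hhd : c.blocks.headI ∈ c.blocks := by
              conv => rw [← headI_cons_tail hne]
              exact List.mem_cons_self
            have hh1 : 1 ≤ c.blocks.headI := c.blocks_pos hhd
            rw [← headI_cons_tail hne] at hr
            rcases List.mem_cons.mp hr with h | h
            · omega
            · have := List.le_sum_of_mem h
              omega
          refine (fact_smul _ _).trans ?_
          exact adList_norm_le' Sseq gfun G (‖V‖/8) c.blocks hne
            (fun r hr => hSb r (c.blocks_pos hr) (hrlt r hr))
            (fun r hr => hCb r (c.blocks_pos hr) (hrlt r hr))
        have hterm2 : ∀ c : Composition (j-1),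
            ‖(((c.length).factorial : ℂ))⁻¹ • adList Sseq c.blocks V‖
              ≤ cProd c.blocks * ‖V‖ := by
          intro c
          have hrlt : ∀ r ∈ c.blocks, r < j := by
            intro r hr
            have h1 := List.le_sum_of_mem hr
            rw [c.blocks_sum] at h1
            omega
          refine (fact_smul _ _).trans ?_
          exact adList_norm_le Sseq gfun V c.blocks
            (fun r hr => hSb r (c.blocks_pos hr) (hrlt r hr))
        have hj1 : (1:ℕ) ≤ j := by omega
        have step1 : ∑ c ∈ Finset.univ.filter (fun c : Composition j => 2 ≤ c.length),
            cProd c.blocks ≤ 2 * 2048^(j-1) / (j:ℝ)^2 :=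
          (split_sum hj1).trans (ksl hj1 (fun m hm _ => cSum_le m hm))
        have step2 : cSum (j-1) ≤ 32 * 2048^(j-1-1) / ((j-1:ℕ):ℝ)^2 :=
          cSum_le (j-1) (by omega)
        -- putting everything together
        have hnorm : ‖Vseq j‖ ≤ (2 * 2048^(j-1) / (j:ℝ)^2) * (‖V‖/8)
            + (32 * 2048^(j-1-1) / ((j-1:ℕ):ℝ)^2) * ‖V‖ := by
          rw [hVrec j hj2]
          calc ‖(∑ c ∈ Finset.univ.filter (fun c : Composition j => 2 ≤ c.length),
                (((c.length).factorial : ℂ))⁻¹ • adList Sseq c.blocks G)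
              + ∑ c : Composition (j - 1),
                (((c.length).factorial : ℂ))⁻¹ • adList Sseq c.blocks V‖
              ≤ ‖∑ c ∈ Finset.univ.filter (fun c : Composition j => 2 ≤ c.length),
                  (((c.length).factorial : ℂ))⁻¹ • adList Sseq c.blocks G‖
                + ‖∑ c : Composition (j - 1),
                  (((c.length).factorial : ℂ))⁻¹ • adList Sseq c.blocks V‖ :=
                norm_add_le _ _
            _ ≤ (∑ c ∈ Finset.univ.filter (fun c : Composition j => 2 ≤ c.length),
                  cProd c.blocks * (‖V‖/8))
                + ∑ c : Composition (j - 1), cProd c.blocks * ‖V‖ :=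
                add_le_add ((norm_sum_le _ _).trans (Finset.sum_le_sum hterm1))
                  ((norm_sum_le _ _).trans (Finset.sum_le_sum (fun c _ => hterm2 c)))
            _ = (∑ c ∈ Finset.univ.filter (fun c : Composition j => 2 ≤ c.length),
                  cProd c.blocks) * (‖V‖/8) + cSum (j-1) * ‖V‖ := by
                rw [← Finset.sum_mul, ← Finset.sum_mul]; rfl
            _ ≤ (2 * 2048^(j-1) / (j:ℝ)^2) * (‖V‖/8)
                + (32 * 2048^(j-1-1) / ((j-1:ℕ):ℝ)^2) * ‖V‖ :=
                add_le_add (mul_le_mul_of_nonneg_right step1 (by positivity))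
                  (mul_le_mul_of_nonneg_right step2 (norm_nonneg V))
        refine hnorm.trans ?_
        -- final arithmetic
        have ha : (2:ℝ) ≤ (j:ℝ) := by exact_mod_cast hj2
        have hc1 : ((j-1:ℕ):ℝ) = (j:ℝ) - 1 := by
          rw [Nat.cast_sub (by omega)]; norm_num
        have hpw : (2048:ℝ)^(j-1) = 2048^(j-1-1) * 2048 := by
          rw [← pow_succ]; congr 1; omega
        set a : ℝ := (j:ℝ) with hadef
        set X : ℝ := (2048:ℝ)^(j-1-1) with hXdef
        have hX : (0:ℝ) < X := by positivity
        rw [hc1, hpw]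
        have hfrac : 32/(a-1)^2 ≤ 1536/a^2 := by
          rw [div_le_div_iff₀ (by nlinarith) (by nlinarith)]
          nlinarith [sq_nonneg (a-2)]
        have hp2 : (32 * X/(a-1)^2) * ‖V‖ ≤ ‖V‖ * X * (1536/a^2) := by
          have e1 : (32 * X/(a-1)^2) * ‖V‖ = ‖V‖ * X * (32/(a-1)^2) := by ring
          rw [e1]
          exact mul_le_mul_of_nonneg_left hfrac (by positivity)
        have hp1 : (2 * (X * 2048)/a^2) * (‖V‖/8) = ‖V‖ * X * (512/a^2) := by ring
        have hrhs : ‖V‖ * (X * 2048) / a^2 = ‖V‖ * X * (512/a^2) + ‖V‖ * X * (1536/a^2) := by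
          ring
        rw [hp1, hrhs]
        linarith
  -- derived bounds
  have vb : ∀ k : ℕ, ‖Vseq (k+1)‖ ≤ ‖V‖ * 2048^k := by
    intro k
    have h := MAIN (k+1) (by omega)
    have e : (k+1) - 1 = k := by omega
    rw [e] at h
    refine h.trans ?_
    have h1 : (1:ℝ) ≤ (((k+1:ℕ)):ℝ)^2 := by
      have h2 : (1:ℝ) ≤ ((k+1:ℕ):ℝ) := by exact_mod_cast Nat.succ_le_succ (Nat.zero_le k)
      nlinarith
    exact div_le_self (by positivity) h1
  have sb : ∀ k : ℕ, ‖Sseq (k+1)‖ ≤ 4 * (‖V‖ * 2048^k) := by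
    intro k
    rw [hS (k+1) (by omega)]
    refine (S_norm_le R (Vseq (k+1)) Pm hRn hPmn).trans ?_
    exact mul_le_mul_of_nonneg_left (vb k) (by norm_num)
  have ht2048 : t * 2048 ≤ 1/4 := by nlinarith
  have bS : ∀ k : ℕ, ‖((t:ℂ))^(k+1) • Sseq (k+1)‖ ≤ (4*t*‖V‖) * (1/4:ℝ)^k := by
    intro k
    rw [norm_smul ((t:ℂ)^(k+1)) (Sseq (k+1)), norm_pow, Complex.norm_real,
      Real.norm_eq_abs, abs_of_pos ht]
    calc t^(k+1) * ‖Sseq (k+1)‖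
        ≤ t^(k+1) * (4*(‖V‖*2048^k)) :=
          mul_le_mul_of_nonneg_left (sb k) (by positivity)
      _ = (4*t*‖V‖) * (t*2048)^k := by rw [mul_pow, pow_succ]; ring
      _ ≤ (4*t*‖V‖) * (1/4:ℝ)^k :=
          mul_le_mul_of_nonneg_left (pow_le_pow_left₀ (by positivity) ht2048 k) (by positivity)
  have bD : ∀ k : ℕ, ‖((t:ℂ))^k •
      ((1 - Pm) * Vseq (k+1) * (1 - Pm) + Pm * Vseq (k+1) * Pm)‖ ≤ ‖V‖ * (1/4:ℝ)^k := by
    intro k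
    rw [norm_smul ((t:ℂ)^k) ((1 - Pm) * Vseq (k+1) * (1 - Pm) + Pm * Vseq (k+1) * Pm),
      norm_pow, Complex.norm_real, Real.norm_eq_abs, abs_of_pos ht]
    calc t^k * ‖(1 - Pm) * Vseq (k+1) * (1 - Pm) + Pm * Vseq (k+1) * Pm‖
        ≤ t^k * ‖Vseq (k+1)‖ :=
          mul_le_mul_of_nonneg_left (diag_norm_le Pm hPm1 hPm2 (Vseq (k+1))) (by positivity)
      _ ≤ t^k * (‖V‖*2048^k) := mul_le_mul_of_nonneg_left (vb k) (by positivity)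
      _ = ‖V‖ * (t*2048)^k := by rw [mul_pow]; ring
      _ ≤ ‖V‖ * (1/4:ℝ)^k :=
          mul_le_mul_of_nonneg_left (pow_le_pow_left₀ (by positivity) ht2048 k) (norm_nonneg V)
  have hgeoS : HasSum (fun k : ℕ => (4*t*‖V‖) * (1/4:ℝ)^k) ((4*t*‖V‖) * (1-(1/4:ℝ))⁻¹) :=
    (hasSum_geometric_of_lt_one (by norm_num) (by norm_num)).mul_left _
  have hgeoD : HasSum (fun k : ℕ => ‖V‖ * (1/4:ℝ)^k) (‖V‖ * (1-(1/4:ℝ))⁻¹) :=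
    (hasSum_geometric_of_lt_one (by norm_num) (by norm_num)).mul_left _
  refine ⟨?_, ?_, ?_, ?_⟩
  · exact Summable.of_norm_bounded hgeoS.summable bS
  · exact Summable.of_norm_bounded hgeoD.summable bD
  · refine (tsum_of_norm_bounded hgeoD bD).trans ?_
    have : (1-(1/4:ℝ))⁻¹ = 4/3 := by norm_num
    rw [this]
    nlinarith [norm_nonneg V]
  · refine (tsum_of_norm_bounded hgeoS bS).trans ?_
    have : (1-(1/4:ℝ))⁻¹ = 4/3 := by norm_num
    rw [this]
    nlinarith [mul_nonneg ht.le (norm_nonneg V)]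
end

section
/- Under the stated assumptions, for any self-adjoint operator W on 𝒦, the operator S := (G − E)^{-1} P⁺ W P⁻ − (the adjoint of this operator) satisfies the commutator identity [S, G] = − P⁺ W P⁻ − P⁻ W P⁺. -/
/-- let `G` be a self-adjoint operator on a finite-dimensional complex
Hilbert space `𝒦`, `P⁻` an orthogonal projection, `P⁺ = 𝟙 - P⁻`, with `G` block-diagonal
w.r.t. `P⁻`, `G P⁻ = E P⁻` where `E = min spec G`, and spectral gap
`P⁺ (G - E) P⁺ ≥ Δ P⁺` with `Δ > 0`.  Let `R` be the inverse of `G - E` on the range of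
`P⁺` (characterized by `R (G - E) = (G - E) R = P⁺` and `R = P⁺ R P⁺`).  Then for any
self-adjoint `W`, the operator `S = R W P⁻ - (R W P⁻)†` satisfies
`[S, G] = -P⁺ W P⁻ - P⁻ W P⁺`. -/
theorem lieSchwinger_commutator_identity
    {𝒦 : Type*} [NormedAddCommGroup 𝒦] [InnerProductSpace ℂ 𝒦] [FiniteDimensional ℂ 𝒦]
    (G Pm R : 𝒦 →L[ℂ] 𝒦) (E Δ : ℝ)
    (hG : IsSelfAdjoint G)
    (hPm : IsSelfAdjoint Pm) (hPmIdem : Pm * Pm = Pm)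
    (hblock : G = (1 - Pm) * G * (1 - Pm) + Pm * G * Pm)
    (hGPm : G * Pm = (E : ℂ) • Pm)
    (hEmem : (E : ℂ) ∈ spectrum ℂ G)
    (hEmin : ∀ z ∈ spectrum ℂ G, E ≤ z.re)
    (hΔ : 0 < Δ)
    (hgap : (((1 - Pm) * (G - (E : ℂ) • 1) * (1 - Pm))
      - ((Δ : ℂ) • (1 - Pm))).IsPositive)
    (hR1 : R * (G - (E : ℂ) • 1) = 1 - Pm)
    (hR2 : (G - (E : ℂ) • 1) * R = 1 - Pm)
    (hR3 : R = (1 - Pm) * R * (1 - Pm))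
    (W : 𝒦 →L[ℂ] 𝒦) (hW : IsSelfAdjoint W) :
    letI S := R * W * Pm - ContinuousLinearMap.adjoint (R * W * Pm)
    S * G - G * S = -((1 - Pm) * W * Pm) - Pm * W * (1 - Pm) := by
  letI S := R * W * Pm - ContinuousLinearMap.adjoint (R * W * Pm)
  have hQQ : ((1 : 𝒦 →L[ℂ] 𝒦) - Pm) * (1 - Pm) = 1 - Pm := by
    simp [mul_sub, sub_mul, hPmIdem]
  have hQR : (1 - Pm) * R = R := by
    conv_lhs => rw [hR3]
    rw [← mul_assoc, ← mul_assoc, hQQ, ← hR3]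
  have hstarQ : star (1 - Pm : 𝒦 →L[ℂ] 𝒦) = 1 - Pm := by
    simp [star_sub, hPm.star_eq]
  have hstarGE : star (G - (E : ℂ) • 1 : 𝒦 →L[ℂ] 𝒦) = G - (E : ℂ) • 1 := by
    simp [star_sub, hG.star_eq, star_smul, Complex.star_def, Complex.conj_ofReal]
  have hRstar1 : star R * (G - (E : ℂ) • 1) = 1 - Pm := by
    calc star R * (G - (E : ℂ) • 1) = star (star (G - (E : ℂ) • 1) * R) := by
          rw [star_mul, star_star]
      _ = 1 - Pm := by rw [hstarGE, hR2, hstarQ]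
  have h1 : star R * (1 - Pm) = star R := by
    have h := congrArg star hQR
    rwa [star_mul, hstarQ] at h
  have hRsa : star R = R := by
    calc star R = star R * (1 - Pm) := h1.symm
      _ = star R * ((G - (E : ℂ) • 1) * R) := by rw [hR2]
      _ = (star R * (G - (E : ℂ) • 1)) * R := by rw [mul_assoc]
      _ = (1 - Pm) * R := by rw [hRstar1]
      _ = R := hQR
  have hAdj : ContinuousLinearMap.adjoint (R * W * Pm) = Pm * W * R := by
    have h : ContinuousLinearMap.adjoint (R * W * Pm) = star (R * W * Pm) := rfl
    rw [h, star_mul, star_mul, hPm.star_eq, hW.star_eq, hRsa, mul_assoc]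
  have hPmG : Pm * G = (E : ℂ) • Pm := by
    have h := congrArg star hGPm
    rwa [star_mul, hPm.star_eq, hG.star_eq, star_smul, Complex.star_def,
      Complex.conj_ofReal, hPm.star_eq] at h
  have hGR : G * R = 1 - Pm + (E : ℂ) • R := by
    have h : (G - (E : ℂ) • 1) * R = 1 - Pm := hR2
    rw [sub_mul, smul_mul_assoc, one_mul] at h
    linear_combination (norm := module) h
  have hRG : R * G = 1 - Pm + (E : ℂ) • R := by
    have h : R * (G - (E : ℂ) • 1) = 1 - Pm := hR1
    rw [mul_sub, mul_smul_comm, mul_one] at h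
    linear_combination (norm := module) h
  show (R * W * Pm - ContinuousLinearMap.adjoint (R * W * Pm)) * G
      - G * (R * W * Pm - ContinuousLinearMap.adjoint (R * W * Pm))
      = -((1 - Pm) * W * Pm) - Pm * W * (1 - Pm)
  rw [hAdj]
  have key : (R * W * Pm - Pm * W * R) * G - G * (R * W * Pm - Pm * W * R)
      = R * W * (Pm * G) - Pm * W * (R * G) - (G * R) * (W * Pm) + (G * Pm) * (W * R) := by
    noncomm_ring
  rw [key, hPmG, hRG, hGR, hGPm]
  simp only [mul_add, add_mul, mul_smul_comm, smul_mul_assoc, mul_sub, sub_mul,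
    one_mul, mul_one, mul_assoc]
  abel
end
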